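/- arXiv:2206.13250 — 4 statements merged into one kernel-verified Lean document; each statement's English description precedes it below -/
import Mathlib

section
/- Define φ(s) = q⁺ · ⌈s⌉⁺ + q⁻ · ⌊s⌋⁻, where ⌈s⌉⁺ = max{⌈s⌉, 0} and ⌊s⌋⁻ = max{-⌊s⌋, 0}, for nonnegative reals q⁺, q⁻. Then for all s ∈ ℝ, ∫_{s-1/2}^{s+1/2} φ(t) dt = q⁺ · max{s + 1/2, 0} + q⁻ · max{-(s - 1/2), 0}. -/
open MeasureTheory intervalIntegral

private lemma ceilmax_mono : Monotone (fun t : ℝ => max (⌈t⌉ : ℝ) 0) :=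
  fun _ _ h => max_le_max (by exact_mod_cast Int.ceil_le_ceil h) le_rfl

private lemma ceilmax_intble (u v : ℝ) :
    IntervalIntegrable (fun t : ℝ => max (⌈t⌉ : ℝ) 0) volume u v :=
  (ceilmax_mono.monotoneOn _).intervalIntegrable

private lemma floormax_intble (u v : ℝ) :
    IntervalIntegrable (fun t : ℝ => max (-(⌊t⌋ : ℝ)) 0) volume u v := by
  have h : Antitone (fun t : ℝ => max (-(⌊t⌋ : ℝ)) 0) := by
    intro x y hxy
    exact max_le_max (by simp; exact_mod_cast Int.floor_le_floor hxy) le_rfl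
  exact (h.antitoneOn _).intervalIntegrable

private lemma integral_ceilmax (a : ℝ) :
    (∫ t in a..(a+1), max (⌈t⌉ : ℝ) 0) = max (a+1) 0 := by
  set n : ℤ := ⌈a⌉ with hn
  have h1 : a ≤ (n : ℝ) := Int.le_ceil a
  have h2 : (n : ℝ) < a + 1 := Int.ceil_lt_add_one a
  have e1 : (∫ t in a..(n:ℝ), max (⌈t⌉ : ℝ) 0) = ((n:ℝ) - a) * max (n:ℝ) 0 := by
    rw [integral_congr (g := fun _ => max (n:ℝ) 0)]
    · rw [intervalIntegral.integral_const, smul_eq_mul]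
    · intro t ht
      rw [Set.uIcc_of_le h1] at ht
      have hc : ⌈t⌉ = n := by
        rw [Int.ceil_eq_iff]
        constructor
        · push_cast; linarith [ht.1]
        · exact ht.2
      simp only [hc]
  have e2 : (∫ t in (n:ℝ)..(a+1), max (⌈t⌉ : ℝ) 0)
      = (a + 1 - (n:ℝ)) * max ((n:ℝ)+1) 0 := by
    rw [integral_of_le h2.le,
      setIntegral_congr_fun measurableSet_Ioc (g := fun _ => max ((n:ℝ)+1) 0)]
    · rw [setIntegral_const, Real.volume_real_Ioc_of_le h2.le, smul_eq_mul]
    · intro t ht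
      have hc : ⌈t⌉ = n + 1 := by
        rw [Int.ceil_eq_iff]
        constructor
        · push_cast; linarith [ht.1]
        · push_cast; linarith [ht.2]
      simp only [hc]
      push_cast
      rfl
  rw [← integral_add_adjacent_intervals (ceilmax_intble a n) (ceilmax_intble n (a+1)),
    e1, e2]
  rcases lt_trichotomy n 0 with h | h | h
  · have hn1 : (n:ℝ) + 1 ≤ 0 := by
      have : n + 1 ≤ 0 := by omega
      exact_mod_cast this
    rw [max_eq_right (by linarith), max_eq_right (by linarith),
      max_eq_right (by linarith)]
    ring
  · have h0 : (n:ℝ) = 0 := by exact_mod_cast h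
    rw [h0]
    rw [max_self, max_eq_left (by norm_num), max_eq_left (by linarith)]
    ring
  · have h1' : (1:ℝ) ≤ (n:ℝ) := by exact_mod_cast h
    rw [max_eq_left (by linarith), max_eq_left (by linarith),
      max_eq_left (by linarith)]
    ring
private lemma integral_floormax (a : ℝ) :
    (∫ t in a..(a+1), max (-(⌊t⌋ : ℝ)) 0) = max (-a) 0 := by
  have h : (∫ t in a..(a+1), max (-(⌊t⌋:ℝ)) 0)
      = ∫ t in a..(a+1), (fun u : ℝ => max (⌈u⌉:ℝ) 0) (-t) := by
    apply integral_congr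
    intro t _
    simp [Int.ceil_neg]
  rw [h, integral_comp_neg (fun u : ℝ => max (⌈u⌉:ℝ) 0),
    show (-a) = -(a+1) + 1 by ring, integral_ceilmax]

/-- UIMA transform of the one-dimensional SIR value function
`φ(s) = q⁺⌈s⌉⁺ + q⁻⌊s⌋⁻`. -/
theorem uima_sir_value_function (qp qm : ℝ) (hqp : 0 ≤ qp) (hqm : 0 ≤ qm) (s : ℝ) :
    (∫ t in (s - 1/2)..(s + 1/2),
        (qp * max (⌈t⌉ : ℝ) 0 + qm * max (-(⌊t⌋ : ℝ)) 0))
      = qp * max (s + 1/2) 0 + qm * max (-(s - 1/2)) 0 := by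
  have h1 := integral_ceilmax (s - 1/2)
  have h2 := integral_floormax (s - 1/2)
  have hs : s - 1/2 + 1 = s + 1/2 := by ring
  rw [hs] at h1 h2
  rw [integral_add ((ceilmax_intble _ _).const_mul qp)
      ((floormax_intble _ _).const_mul qm),
    intervalIntegral.integral_const_mul, intervalIntegral.integral_const_mul, h1, h2]
end

section
/- Let P̄ be a probability measure on ℝ with cdf F̄, and let P be the probability measure with cdf F = γ(F̄), where γ(F̄)(s) = ∫_{s-1/2}^{s+1/2} F̄(t) dt. Then P has density f(t) = F̄(t + 1/2) - F̄(t - 1/2) with respect to Lebesgue measure. -/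
open MeasureTheory

/-- If the cdf of `P` is the UIMA transform of the cdf of `P̄`, then
`P` has density `t ↦ F̄(t+1/2) - F̄(t-1/2)` with respect to Lebesgue measure. -/
theorem uima_measure_density (Pb P : Measure ℝ)
    [IsProbabilityMeasure Pb] [IsProbabilityMeasure P]
    (Fb : ℝ → ℝ) (hFb : ∀ s, Fb s = (Pb (Set.Iic s)).toReal)
    (hF : ∀ s, (P (Set.Iic s)).toReal = ∫ t in (s - 1/2)..(s + 1/2), Fb t) :
    P = volume.withDensity (fun t => ENNReal.ofReal (Fb (t + 1/2) - Fb (t - 1/2))) := by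
  -- Fb is monotone
  have hmono : Monotone Fb := by
    intro x y hxy
    rw [hFb x, hFb y]
    exact ENNReal.toReal_mono (measure_ne_top _ _)
      (measure_mono (Set.Iic_subset_Iic.2 hxy))
  have m1 : Monotone (fun t : ℝ => t + 1/2) := fun x y h => add_le_add_left h _
  have m2 : Monotone (fun t : ℝ => t - 1/2) := fun x y h => sub_le_sub_right h _
  have hint : ∀ a b : ℝ, IntervalIntegrable Fb volume a b := fun a b =>
    hmono.intervalIntegrable
  set f : ℝ → ℝ := fun t => Fb (t + 1/2) - Fb (t - 1/2) with hf
  have hi1 : ∀ a b : ℝ, IntervalIntegrable (fun t => Fb (t + 1/2)) volume a b :=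
    fun a b => (hmono.comp m1).intervalIntegrable
  have hi2 : ∀ a b : ℝ, IntervalIntegrable (fun t => Fb (t - 1/2)) volume a b :=
    fun a b => (hmono.comp m2).intervalIntegrable
  have hintf : ∀ a b : ℝ, IntervalIntegrable f volume a b := fun a b =>
    (hi1 a b).sub (hi2 a b)
  have hfnn : ∀ t, 0 ≤ f t := fun t => sub_nonneg.2 (hmono (by linarith))
  -- key: ∫ a..b f = G b - G a where G s = ∫ (s-1/2)..(s+1/2) Fb
  have key : ∀ a b : ℝ, ∫ t in a..b, f t =
      (∫ t in (b - 1/2)..(b + 1/2), Fb t) - ∫ t in (a - 1/2)..(a + 1/2), Fb t := by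
    intro a b
    have h1 : ∫ t in a..b, Fb (t + 1/2) = ∫ t in (a + 1/2)..(b + 1/2), Fb t :=
      intervalIntegral.integral_comp_add_right ..
    have h2 : ∫ t in a..b, Fb (t - 1/2) = ∫ t in (a - 1/2)..(b - 1/2), Fb t :=
      intervalIntegral.integral_comp_sub_right ..
    have hsub := intervalIntegral.integral_sub (hi1 a b) (hi2 a b)
    simp only [hf]
    rw [hsub, h1, h2]
    have e1 : (∫ t in (a + 1/2)..(b + 1/2), Fb t) =
        (∫ t in (a + 1/2)..(b - 1/2), Fb t) + ∫ t in (b - 1/2)..(b + 1/2), Fb t :=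
      (intervalIntegral.integral_add_adjacent_intervals (hint _ _) (hint _ _)).symm
    have e2 : (∫ t in (a - 1/2)..(b - 1/2), Fb t) =
        (∫ t in (a - 1/2)..(a + 1/2), Fb t) + ∫ t in (a + 1/2)..(b - 1/2), Fb t :=
      (intervalIntegral.integral_add_adjacent_intervals (hint _ _) (hint _ _)).symm
    rw [e1, e2]; ring
  refine Measure.ext_of_Ioc' P _ (fun a b _ => measure_ne_top _ _) (fun a b hab => ?_)
  -- LHS
  have hPIoc : P (Set.Ioc a b) =
      ENNReal.ofReal ((P (Set.Iic b)).toReal - (P (Set.Iic a)).toReal) := by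
    have hd : Set.Iic b \ Set.Iic a = Set.Ioc a b := by ext x; simp [and_comm]
    rw [← hd, measure_diff (Set.Iic_subset_Iic.2 hab.le) nullMeasurableSet_Iic
      (measure_ne_top _ _)]
    rw [← ENNReal.toReal_sub_of_le (measure_mono (Set.Iic_subset_Iic.2 hab.le))
      (measure_ne_top _ _),
      ENNReal.ofReal_toReal (tsub_le_self.trans_lt (measure_lt_top _ _)).ne]
  rw [hPIoc, hF, hF, ← key a b]
  -- RHS
  rw [withDensity_apply _ measurableSet_Ioc]
  rw [← ofReal_integral_eq_lintegral_ofReal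
    ((hintf a b).1.mono_set (by simp [Set.uIoc_of_le hab.le]))
    (Filter.Eventually.of_forall hfnn)]
  rw [intervalIntegral.integral_of_le hab.le]
end

section
/- Let ξ be a real random variable whose distribution is γ(P̄) for some probability measure P̄ on ℝ (i.e., its cdf is the unit interval moving average of the cdf of P̄). Then the fractional part ξ - ⌊ξ⌋ is uniformly distributed on [0,1). -/
open MeasureTheory Set Filter Topology

-- cdf basics
lemma cdf_mono' (μ : Measure ℝ) [IsProbabilityMeasure μ] :
    Monotone (fun t => (μ (Iic t)).toReal) := fun a b hab =>
  ENNReal.toReal_mono (measure_ne_top μ _) (measure_mono (Iic_subset_Iic.2 hab))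

lemma cdf_le_one' (μ : Measure ℝ) [IsProbabilityMeasure μ] (t : ℝ) :
    (μ (Iic t)).toReal ≤ 1 := by
  have := measure_mono (subset_univ (Iic t)) (μ := μ)
  have h2 := ENNReal.toReal_mono (measure_ne_top μ _) this
  simpa using h2

lemma cdf_tendsto_atTop' (μ : Measure ℝ) [IsProbabilityMeasure μ] :
    Tendsto (fun t => (μ (Iic t)).toReal) atTop (𝓝 1) := by
  have h := tendsto_measure_Iic_atTop μ
  rw [measure_univ] at h
  have := (ENNReal.tendsto_toReal (by simp : (1:ENNReal) ≠ ⊤)).comp h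
  simpa [Function.comp_def] using this

lemma cdf_tendsto_atBot' (μ : Measure ℝ) [IsProbabilityMeasure μ] :
    Tendsto (fun t => (μ (Iic t)).toReal) atBot (𝓝 0) := by
  have hIci : Tendsto (fun t : ℝ => (μ (Ici t)).toReal) atBot (𝓝 1) := by
    have h := tendsto_measure_Ici_atBot μ
    rw [measure_univ] at h
    have := (ENNReal.tendsto_toReal (by simp : (1:ENNReal) ≠ ⊤)).comp h
    simpa [Function.comp_def] using this
  have key : ∀ t : ℝ, (μ (Iic t)).toReal ≤ 1 - (μ (Ici (t+1))).toReal := by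
    intro t
    have hsub : Iic t ⊆ (Ici (t+1))ᶜ := by
      intro y hy
      simp only [mem_compl_iff, mem_Ici, not_le]
      exact lt_of_le_of_lt hy (by linarith)
    have h1 : μ (Ici (t+1))ᶜ = μ univ - μ (Ici (t+1)) :=
      measure_compl measurableSet_Ici (measure_ne_top μ _)
    have h2 : (μ (Iic t)).toReal ≤ (μ (Ici (t+1))ᶜ).toReal :=
      ENNReal.toReal_mono (measure_ne_top μ _) (measure_mono hsub)
    rw [h1, measure_univ, ENNReal.toReal_sub_of_le (measure_mono (subset_univ _) |>.trans (by simp)) (by simp)] at h2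
    simpa using h2
  have hlim : Tendsto (fun t : ℝ => 1 - (μ (Ici (t+1))).toReal) atBot (𝓝 0) := by
    have := (hIci.comp (tendsto_atBot_add_const_right atBot 1 tendsto_id)).const_sub 1
    simpa using this
  refine tendsto_of_tendsto_of_tendsto_of_le_of_le tendsto_const_nhds hlim
    (fun t => ENNReal.toReal_nonneg) key

-- integral bounds for monotone G on [a, a+x]
lemma intbd_lower {G : ℝ → ℝ} (hG : Monotone G) {a x : ℝ} (hx : 0 ≤ x) :
    x * G a ≤ ∫ t in a..(a+x), G t := by
  have h := intervalIntegral.integral_mono_on (μ := volume) (f := fun _ => G a) (g := G)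
    (by linarith : a ≤ a + x) intervalIntegrable_const hG.intervalIntegrable
    (fun t ht => hG ht.1)
  simpa [mul_comm] using h

lemma intbd_upper {G : ℝ → ℝ} (hG : Monotone G) {a x : ℝ} (hx : 0 ≤ x) :
    (∫ t in a..(a+x), G t) ≤ x * G (a+x) := by
  have h := intervalIntegral.integral_mono_on (μ := volume) (f := G) (g := fun _ => G (a+x))
    (by linarith : a ≤ a + x) hG.intervalIntegrable intervalIntegrable_const
    (fun t ht => hG ht.2)
  simpa [mul_comm] using h

lemma intbd_nonneg {G : ℝ → ℝ} (hG0 : ∀ t, 0 ≤ G t) {a x : ℝ} (hx : 0 ≤ x) :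
    0 ≤ ∫ t in a..(a+x), G t :=
  intervalIntegral.integral_nonneg (by linarith) (fun t _ => hG0 t)

lemma shift_integral_identity {G : ℝ → ℝ} (hG : Monotone G) {a b x : ℝ}
    (hab : a + x ≤ b) :
    (∫ t in a..b, (G (t + x) - G t))
      = (∫ t in b..(b+x), G t) - ∫ t in a..(a+x), G t := by
  have hGx : Monotone (fun t => G (t + x)) := fun u v huv => hG (by linarith)
  have h1 : (∫ t in a..b, G (t + x)) = ∫ t in (a+x)..(b+x), G t :=
    intervalIntegral.integral_comp_add_right (fun t => G t) x
  have h2 : (∫ t in a..b, (G (t+x) - G t))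
      = (∫ t in a..b, G (t+x)) - ∫ t in a..b, G t :=
    intervalIntegral.integral_sub hGx.intervalIntegrable hG.intervalIntegrable
  have h3 : ((∫ t in (a+x)..b, G t) + ∫ t in b..(b+x), G t) = ∫ t in (a+x)..(b+x), G t :=
    intervalIntegral.integral_add_adjacent_intervals hG.intervalIntegrable hG.intervalIntegrable
  have h4 : ((∫ t in a..(a+x), G t) + ∫ t in (a+x)..b, G t) = ∫ t in a..b, G t :=
    intervalIntegral.integral_add_adjacent_intervals hG.intervalIntegrable hG.intervalIntegrable
  rw [h2, h1]; linarith

lemma atom_zero (Pb P : Measure ℝ) [IsProbabilityMeasure Pb] [IsProbabilityMeasure P]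
    (hF : ∀ s, (P (Iic s)).toReal = ∫ t in (s - 1/2)..(s + 1/2), (Pb (Iic t)).toReal)
    (a : ℝ) : P {a} = 0 := by
  set Fb : ℝ → ℝ := fun t => (Pb (Iic t)).toReal with hFbdef
  have hFbm : Monotone Fb := cdf_mono' Pb
  have key : ∀ ε : ℝ, 0 < ε → ε ≤ 1 → (P {a}).toReal ≤ ε := by
    intro ε hε hε1
    have hsub : {a} ⊆ Ioc (a - ε) a := by
      intro t ht; simp only [mem_singleton_iff] at ht; subst ht
      exact ⟨by linarith, le_rfl⟩
    have h0 : (P {a}).toReal ≤ (P (Ioc (a-ε) a)).toReal :=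
      ENNReal.toReal_mono (measure_ne_top P _) (measure_mono hsub)
    have hunion : Iic (a-ε) ∪ Ioc (a-ε) a = Iic a := Iic_union_Ioc_eq_Iic (by linarith)
    have hm : P (Iic a) = P (Iic (a-ε)) + P (Ioc (a-ε) a) := by
      rw [← hunion, measure_union (Iic_disjoint_Ioc le_rfl) measurableSet_Ioc]
    have hmr : (P (Iic a)).toReal
        = (P (Iic (a-ε))).toReal + (P (Ioc (a-ε) a)).toReal := by
      rw [hm, ENNReal.toReal_add (measure_ne_top P _) (measure_ne_top P _)]
    -- now bound F a - F (a-ε) ≤ ε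
    have hB : (P (Iic a)).toReal = ∫ t in (a - 1/2)..(a + 1/2), Fb t := hF a
    have hA : (P (Iic (a-ε))).toReal = ∫ t in (a - ε - 1/2)..(a - ε + 1/2), Fb t := hF (a-ε)
    have hsplitB : ((∫ t in (a - 1/2)..(a - ε + 1/2), Fb t)
        + ∫ t in (a - ε + 1/2)..(a + 1/2), Fb t) = ∫ t in (a - 1/2)..(a + 1/2), Fb t :=
      intervalIntegral.integral_add_adjacent_intervals hFbm.intervalIntegrable
        hFbm.intervalIntegrable
    have hsplitA : ((∫ t in (a - ε - 1/2)..(a - 1/2), Fb t)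
        + ∫ t in (a - 1/2)..(a - ε + 1/2), Fb t) = ∫ t in (a - ε - 1/2)..(a - ε + 1/2), Fb t :=
      intervalIntegral.integral_add_adjacent_intervals hFbm.intervalIntegrable
        hFbm.intervalIntegrable
    have hup : (∫ t in (a - ε + 1/2)..(a + 1/2), Fb t) ≤ ε := by
      rw [show a + 1/2 = (a - ε + 1/2) + ε by ring]
      calc (∫ t in (a - ε + 1/2)..((a - ε + 1/2) + ε), Fb t)
          ≤ ε * Fb ((a - ε + 1/2) + ε) := intbd_upper hFbm hε.le
        _ ≤ ε * 1 := by
            have := cdf_le_one' Pb ((a - ε + 1/2) + ε)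
            nlinarith
        _ = ε := mul_one ε
    have hlo : 0 ≤ ∫ t in (a - ε - 1/2)..(a - 1/2), Fb t := by
      rw [show a - 1/2 = (a - ε - 1/2) + ε by ring]
      exact intbd_nonneg (fun t => ENNReal.toReal_nonneg) hε.le
    linarith
  have h0 : (P {a}).toReal = 0 := by
    refine le_antisymm ?_ ENNReal.toReal_nonneg
    refine le_of_forall_pos_le_add (fun ε hε => ?_)
    rcases le_or_gt ε 1 with h | h
    · have := key ε hε h; linarith
    · have := key 1 one_pos le_rfl; linarith
  rcases (ENNReal.toReal_eq_zero_iff _).1 h0 with h | h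
  · exact h
  · exact absurd h (measure_ne_top P _)

/-- If `ξ ~ P = γ(P̄)` (the cdf of `P` is the UIMA transform of the
cdf of `P̄`), then the fractional part `ξ - ⌊ξ⌋` is uniform on `[0,1)`. -/
theorem uima_fract_uniform (Pb P : Measure ℝ)
    [IsProbabilityMeasure Pb] [IsProbabilityMeasure P]
    (hF : ∀ s, (P (Set.Iic s)).toReal
      = ∫ t in (s - 1/2)..(s + 1/2), (Pb (Set.Iic t)).toReal) :
    P.map Int.fract = volume.restrict (Set.Ico (0 : ℝ) 1) := by
  have hmf : Measurable (Int.fract : ℝ → ℝ) := measurable_fract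
  haveI : IsProbabilityMeasure (P.map Int.fract) :=
    Measure.isProbabilityMeasure_map hmf.aemeasurable
  refine Measure.ext_of_Iic _ _ (fun x => ?_)
  rw [Measure.map_apply hmf measurableSet_Iic, Measure.restrict_apply measurableSet_Iic]
  rcases lt_or_ge x 0 with hx0 | hx0
  · have h1 : Int.fract ⁻¹' Iic x = ∅ := by
      ext t
      simp only [mem_preimage, mem_Iic, mem_empty_iff_false, iff_false, not_le]
      exact lt_of_lt_of_le hx0 (Int.fract_nonneg t)
    have h2 : Iic x ∩ Ico (0:ℝ) 1 = ∅ := by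
      ext t
      simp only [mem_inter_iff, mem_Iic, mem_Ico, mem_empty_iff_false, iff_false]
      rintro ⟨h, h0, -⟩; linarith
    rw [h1, h2]; simp
  rcases lt_or_ge x 1 with hx1 | hx1
  swap
  · have h1 : Int.fract ⁻¹' Iic x = univ := by
      ext t
      simp only [mem_preimage, mem_Iic, mem_univ, iff_true]
      exact le_of_lt (lt_of_lt_of_le (Int.fract_lt_one t) hx1)
    have h2 : Iic x ∩ Ico (0:ℝ) 1 = Ico (0:ℝ) 1 :=
      inter_eq_right.2 (fun t ht => le_trans (le_of_lt ht.2) hx1)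
    rw [h1, h2, measure_univ, Real.volume_Ico]
    norm_num
  · -- main case 0 ≤ x < 1
    have hRHS : Iic x ∩ Ico (0:ℝ) 1 = Icc 0 x := by
      ext t
      simp only [mem_inter_iff, mem_Iic, mem_Ico, mem_Icc]
      constructor
      · rintro ⟨h1, h2, _⟩; exact ⟨h2, h1⟩
      · rintro ⟨h1, h2⟩; exact ⟨h2, h1, lt_of_le_of_lt h2 hx1⟩
    rw [hRHS, Real.volume_Icc]
    set Fb : ℝ → ℝ := fun t => (Pb (Iic t)).toReal with hFbdef
    have hFbm : Monotone Fb := cdf_mono' Pb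
    have hFbxm : Monotone (fun t => Fb (t + x)) := fun u v huv => hFbm (by linarith)
    have hgint : ∀ u v : ℝ, IntervalIntegrable (fun t => Fb (t + x) - Fb t) volume u v :=
      fun u v => hFbxm.intervalIntegrable.sub hFbm.intervalIntegrable
    -- key pointwise identity
    have hkey : ∀ y : ℝ, (P (Iic (y + x))).toReal - (P (Iic y)).toReal
        = ∫ t in (y - 1/2)..(y + 1/2), (Fb (t + x) - Fb t) := by
      intro y
      have h1 : (∫ t in (y - 1/2)..(y + 1/2), Fb (t + x))
          = ∫ t in (y - 1/2 + x)..(y + 1/2 + x), Fb t :=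
        intervalIntegral.integral_comp_add_right (fun t => Fb t) x
      have h2 : (P (Iic (y + x))).toReal
          = ∫ t in (y + x - 1/2)..(y + x + 1/2), Fb t := hF (y + x)
      have h3 : (P (Iic y)).toReal = ∫ t in (y - 1/2)..(y + 1/2), Fb t := hF y
      have h4 : (∫ t in (y - 1/2)..(y + 1/2), (Fb (t + x) - Fb t))
          = (∫ t in (y - 1/2)..(y + 1/2), Fb (t + x))
            - ∫ t in (y - 1/2)..(y + 1/2), Fb t :=
        intervalIntegral.integral_sub hFbxm.intervalIntegrable hFbm.intervalIntegrable
      rw [h4, h1, h2, h3, show y - 1/2 + x = y + x - 1/2 by ring,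
        show y + 1/2 + x = y + x + 1/2 by ring]
    -- measure of the blocks
    have hIcc : ∀ y : ℝ, (P (Icc y (y + x))).toReal
        = (P (Iic (y + x))).toReal - (P (Iic y)).toReal := by
      intro y
      have he : Icc y (y + x) = {y} ∪ Ioc y (y + x) := by
        ext t
        simp only [mem_Icc, mem_union, mem_singleton_iff, mem_Ioc]
        constructor
        · rintro ⟨h1, h2⟩
          rcases eq_or_lt_of_le h1 with h | h
          · exact Or.inl h.symm
          · exact Or.inr ⟨h, h2⟩
        · rintro (rfl | ⟨h1, h2⟩)
          · exact ⟨le_rfl, by linarith⟩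
          · exact ⟨h1.le, h2⟩
      have hd : Disjoint ({y} : Set ℝ) (Ioc y (y + x)) := by
        simp
      have hPIcc : P (Icc y (y + x)) = P (Ioc y (y + x)) := by
        rw [he, measure_union hd measurableSet_Ioc, atom_zero Pb P hF y, zero_add]
      have hunion : Iic y ∪ Ioc y (y + x) = Iic (y + x) :=
        Iic_union_Ioc_eq_Iic (by linarith)
      have hm2 : P (Iic (y + x)) = P (Iic y) + P (Ioc y (y + x)) := by
        rw [← hunion, measure_union (Iic_disjoint_Ioc le_rfl) measurableSet_Ioc]
      have htr := ENNReal.toReal_add (measure_ne_top P (Iic y))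
        (measure_ne_top P (Ioc y (y + x)))
      rw [hPIcc, hm2, htr]; ring
    -- sets
    have hSeq : Int.fract ⁻¹' Iic x = ⋃ n : ℤ, Icc (n:ℝ) ((n:ℝ) + x) := by
      ext t
      simp only [mem_preimage, mem_Iic, mem_iUnion, mem_Icc]
      constructor
      · intro h
        refine ⟨⌊t⌋, Int.floor_le t, ?_⟩
        have := Int.self_sub_floor t
        linarith [this ▸ h]
      · rintro ⟨n, h1, h2⟩
        have hfl : ⌊t⌋ = n := by
          rw [Int.floor_eq_iff]
          exact ⟨h1, by linarith⟩
        have hfr : Int.fract t = t - (n:ℝ) := by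
          rw [← Int.self_sub_floor, hfl]
        rw [hfr]; linarith
    set A : ℤ → Set ℝ := fun n => Icc (n:ℝ) ((n:ℝ) + x) with hAdef
    set B : ℕ → Set ℝ := fun N => ⋃ k ∈ Finset.range (2*N+1), A ((k:ℤ) - N) with hBdef
    have hAdisj : ∀ m n : ℤ, m ≠ n → Disjoint (A m) (A n) := by
      have key : ∀ m n : ℤ, m < n → Disjoint (A m) (A n) := by
        intro m n h
        rw [Set.disjoint_left]
        rintro t ⟨h1, h2⟩ ⟨h3, h4⟩
        have hcast : (m:ℝ) + 1 ≤ (n:ℝ) := by exact_mod_cast Int.add_one_le_iff.2 h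
        linarith
      intro m n hmn
      rcases lt_or_gt_of_ne hmn with h | h
      · exact key m n h
      · exact (key n m h).symm
    have hBmono : Monotone B := by
      intro M N hMN
      refine Set.iUnion₂_subset (fun k hk => ?_)
      refine subset_iUnion₂_of_subset (k + (N - M)) ?_ ?_
      · simp only [Finset.mem_range] at hk ⊢; omega
      · have he : ((k + (N - M) : ℕ) : ℤ) - (N:ℤ) = (k:ℤ) - (M:ℤ) := by omega
        rw [he]
    have hBunion : (⋃ N, B N) = ⋃ n : ℤ, A n := by
      apply subset_antisymm
      · exact iUnion_subset fun N => iUnion₂_subset fun k _ => subset_iUnion A _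
      · refine iUnion_subset (fun n => ?_)
        refine subset_iUnion_of_subset n.natAbs ?_
        refine subset_iUnion₂_of_subset (n + n.natAbs).toNat ?_ ?_
        · simp only [Finset.mem_range]; omega
        · have he : (((n + (n.natAbs:ℤ)).toNat : ℕ) : ℤ) - ((n.natAbs : ℕ) : ℤ) = n := by omega
          rw [he]
    -- measure of B N
    have hPBr : ∀ N : ℕ, (P (B N)).toReal
        = ∑ k ∈ Finset.range (2*N+1), (P (A ((k:ℤ) - N))).toReal := by
      intro N
      have h := measure_biUnion_finset (μ := P)
        (s := Finset.range (2*N+1)) (f := fun k : ℕ => A ((k:ℤ) - N))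
        (fun k _ l _ hkl => hAdisj _ _ (by omega))
        (fun k _ => measurableSet_Icc)
      rw [hBdef]
      rw [h, ENNReal.toReal_sum (fun k _ => measure_ne_top P _)]
    have hterm : ∀ n : ℤ, (P (A n)).toReal
        = ∫ t in ((n:ℝ) - 1/2)..((n:ℝ) + 1/2), (Fb (t + x) - Fb t) := by
      intro n
      rw [show A n = Icc (n:ℝ) ((n:ℝ) + x) from rfl, hIcc ((n:ℝ)), hkey ((n:ℝ))]
    have hsum : ∀ N : ℕ, (P (B N)).toReal
        = ∫ t in (-(N:ℝ) - 1/2)..((N:ℝ) + 1/2), (Fb (t + x) - Fb t) := by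
      intro N
      rw [hPBr N]
      have hadj := intervalIntegral.sum_integral_adjacent_intervals
        (a := fun k : ℕ => (k:ℝ) - (N:ℝ) - 1/2) (n := 2*N+1)
        (f := fun t => Fb (t + x) - Fb t) (μ := volume) (fun k _ => hgint _ _)
      have hstep : ∀ k : ℕ, (P (A ((k:ℤ) - N))).toReal
          = ∫ t in ((k:ℝ) - (N:ℝ) - 1/2)..(((k+1:ℕ):ℝ) - (N:ℝ) - 1/2), (Fb (t + x) - Fb t) := by
        intro k
        rw [hterm ((k:ℤ) - N)]
        have e1 : (((k:ℤ) - (N:ℤ) : ℤ):ℝ) - 1/2 = (k:ℝ) - (N:ℝ) - 1/2 := by push_cast; ring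
        have e2 : (((k:ℤ) - (N:ℤ) : ℤ):ℝ) + 1/2 = ((k+1:ℕ):ℝ) - (N:ℝ) - 1/2 := by push_cast; ring
        rw [e1, e2]
    
      rw [Finset.sum_congr rfl (fun k _ => hstep k), hadj]
      have ea : ((fun k : ℕ => (k:ℝ) - (N:ℝ) - 1/2) 0) = -(N:ℝ) - 1/2 := by norm_num
      have eb : ((fun k : ℕ => (k:ℝ) - (N:ℝ) - 1/2) (2*N+1)) = (N:ℝ) + 1/2 := by
        push_cast; ring
      beta_reduce at ea eb
      rw [ea, eb]
    have hval : ∀ N : ℕ, (P (B N)).toReal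
        = (∫ t in ((N:ℝ) + 1/2)..(((N:ℝ) + 1/2) + x), Fb t)
          - ∫ t in (-(N:ℝ) - 1/2)..((-(N:ℝ) - 1/2) + x), Fb t := by
      intro N
      rw [hsum N]
      refine shift_integral_identity hFbm ?_
      have hN : (0:ℝ) ≤ (N:ℝ) := Nat.cast_nonneg N
      linarith
    -- limits
    have hLtop : Tendsto (fun N : ℕ => (N:ℝ) + 1/2) atTop atTop :=
      tendsto_atTop_add_const_right atTop _ tendsto_natCast_atTop_atTop
    have hLbot : Tendsto (fun N : ℕ => (-(N:ℝ) - 1/2) + x) atTop atBot := by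
      have h1 : Tendsto (fun N : ℕ => -(N:ℝ)) atTop atBot :=
        tendsto_neg_atTop_atBot.comp tendsto_natCast_atTop_atTop
      have := tendsto_atBot_add_const_right atTop (-(1:ℝ)/2 + x) h1
      refine this.congr (fun N => by ring)
    have h1 : Tendsto (fun N : ℕ => ∫ t in ((N:ℝ) + 1/2)..(((N:ℝ) + 1/2) + x), Fb t)
        atTop (𝓝 x) := by
      have hub : ∀ N : ℕ, (∫ t in ((N:ℝ)+1/2)..(((N:ℝ)+1/2)+x), Fb t) ≤ x := by
        intro N
        refine le_trans (intbd_upper hFbm hx0) ?_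
        have := cdf_le_one' Pb (((N:ℝ)+1/2)+x)
        nlinarith
      have hlb : ∀ N : ℕ, x * Fb ((N:ℝ)+1/2)
          ≤ ∫ t in ((N:ℝ)+1/2)..(((N:ℝ)+1/2)+x), Fb t :=
        fun N => intbd_lower hFbm hx0
      have hlbl : Tendsto (fun N : ℕ => x * Fb ((N:ℝ)+1/2)) atTop (𝓝 (x * 1)) :=
        ((cdf_tendsto_atTop' Pb).comp hLtop).const_mul x
      rw [mul_one] at hlbl
      exact tendsto_of_tendsto_of_tendsto_of_le_of_le hlbl tendsto_const_nhds hlb hub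
    have h2 : Tendsto (fun N : ℕ => ∫ t in (-(N:ℝ) - 1/2)..((-(N:ℝ)-1/2) + x), Fb t)
        atTop (𝓝 0) := by
      have hub : ∀ N : ℕ, (∫ t in (-(N:ℝ)-1/2)..((-(N:ℝ)-1/2)+x), Fb t)
          ≤ x * Fb ((-(N:ℝ)-1/2)+x) := fun N => intbd_upper hFbm hx0
      have hlb : ∀ N : ℕ, 0 ≤ ∫ t in (-(N:ℝ)-1/2)..((-(N:ℝ)-1/2)+x), Fb t :=
        fun N => intbd_nonneg (fun t => ENNReal.toReal_nonneg) hx0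
      have hubl : Tendsto (fun N : ℕ => x * Fb ((-(N:ℝ)-1/2)+x)) atTop (𝓝 (x * 0)) :=
        ((cdf_tendsto_atBot' Pb).comp hLbot).const_mul x
      rw [mul_zero] at hubl
      exact tendsto_of_tendsto_of_tendsto_of_le_of_le tendsto_const_nhds hubl hlb hub
    have hT : Tendsto (fun N : ℕ => (P (B N)).toReal) atTop (𝓝 x) := by
      have := h1.sub h2
      rw [sub_zero] at this
      exact Tendsto.congr (fun N => (hval N).symm) this
    have hmeas : Tendsto (fun N : ℕ => P (B N)) atTop (𝓝 (P (⋃ N, B N))) :=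
      tendsto_measure_iUnion_atTop hBmono
    have hmeasr : Tendsto (fun N : ℕ => (P (B N)).toReal) atTop (𝓝 (P (⋃ N, B N)).toReal) :=
      (ENNReal.tendsto_toReal (measure_ne_top P _)).comp hmeas
    have hPS : (P (⋃ N, B N)).toReal = x := tendsto_nhds_unique hmeasr hT
    have hset : Int.fract ⁻¹' Iic x = ⋃ N, B N := by rw [hBunion, hSeq]
    rw [hset, ← ENNReal.ofReal_toReal (measure_ne_top P _), hPS, sub_zero]
end

section
/- Let g : ℝ → ℝ be measurable with sup_s |g(s)|/(1+|s|) < ∞, and let P̄ be a probability measure on ℝ with finite first moment. Let P = γ(P̄) be the probability measure whose cdf is the UIMA transform of the cdf of P̄. Then E^P[g(ξ)] = E^P̄[γ(g)(ξ)], where γ(g)(s) = ∫_{s-1/2}^{s+1/2} g(t) dt. -/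
open MeasureTheory Set

private lemma uima_len1 (s x : ℝ) :
    ENNReal.ofReal (min (1/2) (s - x) + 1/2)
      = ENNReal.ofReal (max (s + 1/2) x - max (s - 1/2) x) := by
  rcases le_total x (s - 1/2) with h1 | h1
  · rw [min_eq_left (by linarith), max_eq_left (by linarith), max_eq_left h1]
    norm_num
  · rcases le_total x (s + 1/2) with h2 | h2
    · rw [min_eq_right (by linarith), max_eq_left h2, max_eq_right h1]
      congr 1; ring
    · rw [max_eq_right h2, max_eq_right h1, sub_self, ENNReal.ofReal_zero,
        min_eq_right (by linarith), ENNReal.ofReal_eq_zero]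
      linarith

private lemma uima_len2 (s x : ℝ) :
    (volume (Set.Ici x ∩ Set.Ioc (s - 1/2) (s + 1/2))).toReal
      = max (s + 1/2) x - max (s - 1/2) x := by
  rcases le_or_gt x (s - 1/2) with h | h
  · have hsub : Set.Ioc (s - 1/2) (s + 1/2) ⊆ Set.Ici x := fun t ht => le_trans h ht.1.le
    rw [Set.inter_eq_right.mpr hsub, Real.volume_Ioc, max_eq_left (by linarith),
      max_eq_left h, ENNReal.toReal_ofReal (by linarith)]
  · have hset : Set.Ici x ∩ Set.Ioc (s - 1/2) (s + 1/2) = Set.Icc x (s + 1/2) := by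
      ext t
      simp only [Set.mem_inter_iff, Set.mem_Ici, Set.mem_Ioc, Set.mem_Icc]
      constructor
      · rintro ⟨h1, _, h3⟩; exact ⟨h1, h3⟩
      · rintro ⟨h1, h2⟩; exact ⟨h1, lt_of_lt_of_le h h1, h2⟩
    rw [hset, Real.volume_Icc, max_eq_right h.le]
    rcases le_total x (s + 1/2) with h2 | h2
    · rw [ENNReal.toReal_ofReal (by linarith), max_eq_left h2]
    · rw [max_eq_right h2, sub_self, ENNReal.toReal_eq_zero_iff]
      left; rw [ENNReal.ofReal_eq_zero]; linarith

private lemma uima_hmax_meas (s : ℝ) :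
    Measurable fun x : ℝ => max (s + 1/2) x - max (s - 1/2) x := by
  fun_prop

private lemma uima_hmax_nonneg (s x : ℝ) :
    0 ≤ max (s + 1/2) x - max (s - 1/2) x := by
  rcases le_total x (s - 1/2) with h | h
  · rw [max_eq_left h, max_eq_left (by linarith)]; linarith
  · rw [max_eq_right h]
    exact sub_nonneg.mpr (le_max_right _ _)

/-- Fubini step for the cdf integral. -/
private lemma uima_A (Pb : Measure ℝ) [IsProbabilityMeasure Pb] (s : ℝ) :
    ∫ t in (s - 1/2)..(s + 1/2), (Pb (Set.Iic t)).toReal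
      = ∫ x, (max (s + 1/2) x - max (s - 1/2) x) ∂Pb := by
  rw [intervalIntegral.integral_of_le (by linarith)]
  have hpt : ∀ t : ℝ, (Pb (Set.Iic t)).toReal
      = ∫ x, Set.indicator {p : ℝ × ℝ | p.2 ≤ p.1} (fun _ => (1:ℝ)) (t, x) ∂Pb := by
    intro t
    have : (fun x : ℝ => Set.indicator {p : ℝ × ℝ | p.2 ≤ p.1} (fun _ => (1:ℝ)) (t, x))
        = fun x : ℝ => Set.indicator (Set.Iic t) (fun _ => (1:ℝ)) x := by
      ext x; simp [Set.indicator_apply]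
    rw [this, integral_indicator_const (1:ℝ) measurableSet_Iic, smul_eq_mul, mul_one]
    rfl
  calc ∫ t in Set.Ioc (s - 1/2) (s + 1/2), (Pb (Set.Iic t)).toReal
      = ∫ t in Set.Ioc (s - 1/2) (s + 1/2),
          ∫ x, Set.indicator {p : ℝ × ℝ | p.2 ≤ p.1} (fun _ => (1:ℝ)) (t, x) ∂Pb := by
        exact setIntegral_congr_fun measurableSet_Ioc (fun t _ => hpt t)
    _ = ∫ x, (∫ t in Set.Ioc (s - 1/2) (s + 1/2),
          Set.indicator {p : ℝ × ℝ | p.2 ≤ p.1} (fun _ => (1:ℝ)) (t, x)) ∂Pb := by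
        have hmeas : MeasurableSet {p : ℝ × ℝ | p.2 ≤ p.1} :=
          measurableSet_le measurable_snd measurable_fst
        have hintg : Integrable
            (Function.uncurry fun t x =>
              Set.indicator {p : ℝ × ℝ | p.2 ≤ p.1} (fun _ => (1:ℝ)) (t, x))
            ((volume.restrict (Set.Ioc (s - 1/2) (s + 1/2))).prod Pb) :=
          (integrable_const (1:ℝ)).indicator hmeas
        exact integral_integral_swap hintg
    _ = ∫ x, (max (s + 1/2) x - max (s - 1/2) x) ∂Pb := by
        apply integral_congr_ae
        filter_upwards with x
        have : (fun t : ℝ => Set.indicator {p : ℝ × ℝ | p.2 ≤ p.1} (fun _ => (1:ℝ)) (t, x))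
            = fun t : ℝ => Set.indicator (Set.Ici x) (fun _ => (1:ℝ)) t := by
          ext t; simp [Set.indicator_apply]
        rw [this, MeasureTheory.integral_indicator measurableSet_Ici,
          MeasureTheory.setIntegral_const, smul_eq_mul, mul_one,
          measureReal_def, Measure.restrict_apply measurableSet_Ici]
        exact uima_len2 s x

/-- `E^{γ(P̄)}[g(ξ)] = E^{P̄}[γ(g)(ξ)]` for measurable `g` of at most
linear growth and `P̄` with finite first moment. -/
theorem uima_expectation_swap (g : ℝ → ℝ) (hg : Measurable g) (C : ℝ)
    (hgrowth : ∀ s, |g s| ≤ C * (1 + |s|))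
    (Pb P : Measure ℝ) [IsProbabilityMeasure Pb] [IsProbabilityMeasure P]
    (hmom : Integrable (fun x : ℝ => x) Pb)
    (hF : ∀ s, (P (Set.Iic s)).toReal
      = ∫ t in (s - 1/2)..(s + 1/2), (Pb (Set.Iic t)).toReal) :
    (∫ x, g x ∂P) = ∫ x, (∫ t in (x - 1/2)..(x + 1/2), g t) ∂Pb := by
  classical
  set S : Set ℝ := Set.Ioc (-(1/2) : ℝ) (1/2) with hS
  set ν : Measure ℝ := volume.restrict S with hνdef
  haveI : IsProbabilityMeasure ν := by
    constructor
    rw [hνdef, Measure.restrict_apply_univ, hS, Real.volume_Ioc]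
    norm_num
  set μ : Measure ℝ := (Pb.prod ν).map (fun p : ℝ × ℝ => p.1 + p.2) with hμdef
  haveI : IsProbabilityMeasure μ :=
    Measure.isProbabilityMeasure_map (measurable_fst.add measurable_snd).aemeasurable
  -- Step 1: μ on Iic
  have hB : ∀ s : ℝ, μ (Set.Iic s)
      = ∫⁻ x, ENNReal.ofReal (max (s + 1/2) x - max (s - 1/2) x) ∂Pb := by
    intro s
    rw [hμdef, Measure.map_apply (show Measurable (fun p : ℝ × ℝ => p.1 + p.2) from measurable_fst.add measurable_snd) measurableSet_Iic,
      Measure.prod_apply ((show Measurable (fun p : ℝ × ℝ => p.1 + p.2) from measurable_fst.add measurable_snd) measurableSet_Iic)]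
    apply lintegral_congr
    intro x
    have hpre : Prod.mk x ⁻¹' ((fun p : ℝ × ℝ => p.1 + p.2) ⁻¹' Set.Iic s)
        = Set.Iic (s - x) := by
      ext u; simp [Set.mem_Iic]; constructor <;> intro h <;> linarith
    rw [hpre, hνdef, Measure.restrict_apply measurableSet_Iic, hS,
      Set.inter_comm, Set.Ioc_inter_Iic, Real.volume_Ioc]
    have : min (1/2 : ℝ) (s - x) - -(1/2) = min (1/2) (s - x) + 1/2 := by ring
    rw [this]
    exact uima_len1 s x
  -- Step 2: P = μ
  have hPμ : P = μ := by
    apply Measure.ext_of_Iic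
    intro a
    have h1 : (P (Set.Iic a)).toReal = (μ (Set.Iic a)).toReal := by
      rw [hF a, uima_A Pb a, hB a]
      rw [integral_eq_lintegral_of_nonneg_ae
        (Filter.Eventually.of_forall (uima_hmax_nonneg a))
        (uima_hmax_meas a).aestronglyMeasurable]
    exact (ENNReal.toReal_eq_toReal_iff' (measure_ne_top P _) (measure_ne_top μ _)).mp h1
  -- Step 3: integrability on the product
  have hC : (0 : ℝ) ≤ C := by
    have h := hgrowth 0
    have h0 := abs_nonneg (g 0)
    simp only [abs_zero] at h
    linarith
  have hBint : Integrable (fun p : ℝ × ℝ => C * (3/2 + |p.1|)) (Pb.prod ν) := by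
    have h1 : Integrable (fun x : ℝ => C * (3/2 + |x|)) Pb :=
      ((integrable_const (3/2 : ℝ)).add hmom.abs).const_mul C
    have hmap : Measure.map Prod.fst (Pb.prod ν) = Pb := Measure.fst_prod
    exact (integrable_map_measure (by rw [hmap]; exact h1.aestronglyMeasurable)
      measurable_fst.aemeasurable).mp (by rw [hmap]; exact h1)
  have haeS : ∀ᵐ p : ℝ × ℝ ∂(Pb.prod ν), p.2 ∈ S := by
    rw [ae_iff]
    have hset : {p : ℝ × ℝ | ¬ p.2 ∈ S} = Set.univ ×ˢ Sᶜ := by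
      ext p; simp
    rw [hset, Measure.prod_prod]
    have : ν Sᶜ = 0 := by
      rw [hνdef, Measure.restrict_apply (measurableSet_Ioc.compl), Set.compl_inter_self,
        measure_empty]
    rw [this, mul_zero]
  have hint : Integrable (fun p : ℝ × ℝ => g (p.1 + p.2)) (Pb.prod ν) := by
    apply Integrable.mono' hBint
      ((hg.comp (measurable_fst.add measurable_snd)).aestronglyMeasurable)
    filter_upwards [haeS] with p hp
    have hu : |p.2| ≤ 1/2 := abs_le.mpr ⟨by linarith [hp.1], hp.2⟩
    have h1 : |g (p.1 + p.2)| ≤ C * (1 + |p.1 + p.2|) := hgrowth _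
    have h2 : |p.1 + p.2| ≤ |p.1| + 1/2 := le_trans (abs_add_le _ _) (by linarith)
    calc ‖g (p.1 + p.2)‖ = |g (p.1 + p.2)| := rfl
      _ ≤ C * (1 + |p.1 + p.2|) := h1
      _ ≤ C * (3/2 + |p.1|) := by nlinarith
  -- Step 4: conclude
  rw [hPμ, hμdef,
    integral_map (show Measurable (fun p : ℝ × ℝ => p.1 + p.2) from measurable_fst.add measurable_snd).aemeasurable hg.aestronglyMeasurable,
    MeasureTheory.integral_prod _ hint]
  apply integral_congr_ae
  filter_upwards with x
  have h1 : ∫ u, g (x + u) ∂ν = ∫ u in (-(1/2) : ℝ)..(1/2), g (x + u) := by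
    rw [intervalIntegral.integral_of_le (by norm_num)]
  rw [h1, intervalIntegral.integral_comp_add_left g x,
    show x + -(1/2 : ℝ) = x - 1/2 by ring]
end
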